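/- Under the Kropina change with h-vector, if the vector bᵢ is tangent to the hypersurface (bⱼNʲ = 0, where Nⁱ is the g-unit normal with lᵢNⁱ = 0 and gᵢⱼBⁱ_αNʲ = 0), then *Nⁱ = Nⁱ/√(2τ² − ρτ³) is the unique (up to sign) *g-unit normal to the hypersurface: *gᵢⱼBⁱ_α(*Nʲ) = 0 and *gᵢⱼ(*Nⁱ)(*Nʲ) = 1, provided 2τ² − ρτ³ > 0. -/

import Mathlib

open scoped BigOperators

/-- If the h-vector `b` is tangent to the hypersurface (`bⱼNʲ = 0`), then
`*Nⁱ = Nⁱ/√(2τ² − ρτ³)` is a `*g`-unit normal to the hypersurface: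
`*gᵢⱼ Bⁱ_α (*Nʲ) = 0` and `*gᵢⱼ (*Nⁱ)(*Nʲ) = 1`, provided `2τ² − ρτ³ > 0`. -/
theorem kropina_unit_normal
    {n m : ℕ} (g : Matrix (Fin n) (Fin n) ℝ)
    (l bb N : Fin n → ℝ) (B : Fin m → Fin n → ℝ) (τ ρ : ℝ)
    (gstar : Fin n → Fin n → ℝ)
    (hgstar : ∀ i j, gstar i j =
      (2 * τ ^ 2 - ρ * τ ^ 3) * g i j + 3 * τ ^ 4 * bb i * bb j
        - 4 * τ ^ 3 * (l i * bb j + bb i * l j)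
        + (4 * τ ^ 2 + ρ * τ ^ 3) * l i * l j)
    (hBN : ∀ α, (∑ i, ∑ j, g i j * B α i * N j) = 0)
    (hNN : (∑ i, ∑ j, g i j * N i * N j) = 1)
    (hlN : (∑ i, l i * N i) = 0)
    (hbN : (∑ j, bb j * N j) = 0)
    (hpos : 0 < 2 * τ ^ 2 - ρ * τ ^ 3)
    (Nstar : Fin n → ℝ)
    (hNstar : ∀ i, Nstar i = N i / Real.sqrt (2 * τ ^ 2 - ρ * τ ^ 3)) :
    (∀ α, (∑ i, ∑ j, gstar i j * B α i * Nstar j) = 0) ∧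
      (∑ i, ∑ j, gstar i j * Nstar i * Nstar j) = 1 := by
  set A := 2 * τ ^ 2 - ρ * τ ^ 3 with hA
  set s := Real.sqrt A with hsdef
  have hs : s * s = A := Real.mul_self_sqrt hpos.le
  have hspos : 0 < s := Real.sqrt_pos.mpr hpos
  have key : ∀ X Y : Fin n → ℝ, (∑ i, ∑ j, gstar i j * X i * Y j)
      = A * (∑ i, ∑ j, g i j * X i * Y j)
        + 3 * τ ^ 4 * ((∑ i, bb i * X i) * (∑ j, bb j * Y j))
        - 4 * τ ^ 3 * ((∑ i, l i * X i) * (∑ j, bb j * Y j)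
            + (∑ i, bb i * X i) * (∑ j, l j * Y j))
        + (4 * τ ^ 2 + ρ * τ ^ 3) * ((∑ i, l i * X i) * (∑ j, l j * Y j)) := by
    intro X Y
    have e1 : ∀ u v : Fin n → ℝ,
        (∑ i, u i * X i) * (∑ j, v j * Y j) = ∑ i, ∑ j, (u i * X i) * (v j * Y j) := by
      intro u v
      rw [Finset.sum_mul_sum]
    rw [e1, e1, e1, e1]
    simp only [Finset.mul_sum, ← Finset.sum_add_distrib, ← Finset.sum_sub_distrib]
    refine Finset.sum_congr rfl fun i _ => Finset.sum_congr rfl fun j _ => ?_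
    rw [hgstar]
    ring
  have hsum : ∀ f : Fin n → ℝ, (∑ j, f j * Nstar j) = (∑ j, f j * N j) / s := by
    intro f
    simp [hNstar, Finset.sum_div, mul_div_assoc]
  have hdsum : ∀ X : Fin n → ℝ,
      (∑ i, ∑ j, g i j * X i * Nstar j) = (∑ i, ∑ j, g i j * X i * N j) / s := by
    intro X
    simp [hNstar, Finset.sum_div, mul_div_assoc]
  constructor
  · intro α
    rw [key, hdsum, hsum, hsum, hBN α, hbN, hlN]
    simp
  · have h1 : (∑ i, ∑ j, g i j * Nstar i * Nstar j) = 1 / (s * s) := by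
      rw [hdsum]
      have : ∀ i, (∑ j, g i j * Nstar i * N j) = (∑ j, g i j * N i * N j) / s := by
        intro i
        simp only [hNstar, Finset.sum_div]
        refine Finset.sum_congr rfl fun j _ => by ring
      simp only [this]
      rw [← Finset.sum_div, hNN, div_div]
    have h2 : (∑ i, bb i * Nstar i) = 0 := by rw [hsum, hbN]; simp
    have h3 : (∑ i, l i * Nstar i) = 0 := by rw [hsum, hlN]; simp
    rw [key, h1, h2, h3, hs]
    field_simp
    ring
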